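/- arXiv:0907.3254 — 2 statements merged into one kernel-verified Lean document; each statement's English description precedes it below -/
import Mathlib

section
/- Let n ≥ 1 and 1 ≤ k ≤ n. For each j with 1 ≤ j ≤ n+1, the number of paths p in 𝒫(n,1,1) with p_1 = +1 that have exactly k peaks and exactly j up steps starting on or below the x-axis equals (1/(n+1))·C(n+1,k)·C(n−1,k−1). -/
open Finset

/-- The sum of the first `m` entries of a sequence `p` of length `N` (the height `s_m`). -/
def psum {N : ℕ} (p : Fin N → ℤ) (m : ℕ) : ℤ :=
  ∑ j ∈ Finset.univ.filter (fun j : Fin N => (j : ℕ) < m), p j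

namespace CF


def rot {N : ℕ} (t : Fin N) (q : Fin N → ℤ) : Fin N → ℤ := fun i => q (i + t)

def extz {N : ℕ} (p : Fin N → ℤ) (j : ℕ) : ℤ := if h : j < N then p ⟨j, h⟩ else 0

def exti {N : ℕ} (p : Fin N → ℤ) (j : ℕ) : ℤ := extz p (j % N)

def G {N : ℕ} (p : Fin N → ℤ) (m : ℕ) : ℤ := ∑ j ∈ Finset.range m, exti p j

lemma psum_zero {N : ℕ} (p : Fin N → ℤ) : psum p 0 = 0 := by
  simp [psum]

lemma psum_succ {N : ℕ} (p : Fin N → ℤ) (m : ℕ) :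
    psum p (m+1) = psum p m + extz p m := by
  unfold psum extz
  by_cases hm : m < N
  · rw [dif_pos hm]
    have : Finset.univ.filter (fun j : Fin N => (j : ℕ) < m+1)
        = insert ⟨m, hm⟩ (Finset.univ.filter (fun j : Fin N => (j : ℕ) < m)) := by
      ext j
      simp only [Finset.mem_filter, Finset.mem_univ, true_and, Finset.mem_insert, Fin.ext_iff]
      omega
    rw [this, Finset.sum_insert (by simp)]
    ring
  · rw [dif_neg hm]
    have : ∀ j : Fin N, ((j : ℕ) < m+1) = ((j:ℕ) < m) := by
      intro j; have := j.is_lt; simp only [eq_iff_iff]; omega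
    simp only [this]
    ring

lemma psum_eq_range {N : ℕ} (p : Fin N → ℤ) (m : ℕ) :
    psum p m = ∑ j ∈ Finset.range m, extz p j := by
  induction m with
  | zero => simp [psum_zero]
  | succ m ih => rw [psum_succ, Finset.sum_range_succ, ih]

lemma psum_eq_G {N : ℕ} (p : Fin N → ℤ) (m : ℕ) (hm : m ≤ N) :
    psum p m = G p m := by
  rw [psum_eq_range, G]
  apply Finset.sum_congr rfl
  intro j hj
  rw [Finset.mem_range] at hj
  rw [exti, Nat.mod_eq_of_lt (lt_of_lt_of_le hj hm)]

lemma G_split {N : ℕ} (p : Fin N → ℤ) (s : ℕ) (h1 : N ≤ s) (h2 : s ≤ 2*N) :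
    G p s = G p N + psum p (s - N) := by
  rw [psum_eq_range]
  rw [G, ← Finset.sum_range_add_sum_Ico _ h1, ← G]
  congr 1
  rw [Finset.sum_Ico_eq_sum_range]
  apply Finset.sum_congr rfl
  intro j hj
  rw [Finset.mem_range] at hj
  rw [exti, Nat.add_mod_left, Nat.mod_eq_of_lt (by omega)]

lemma psum_rot_eq {N : ℕ} (t : Fin N) (q : Fin N → ℤ) (m : ℕ) (hm : m ≤ N) :
    psum (rot t q) m = G q ((t:ℕ) + m) - G q (t:ℕ) := by
  have hN : 0 < N := t.pos
  rw [psum_eq_range]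
  have hrot : ∀ j ∈ Finset.range m, extz (rot t q) j = exti q ((t:ℕ) + j) := by
    intro j hj
    rw [Finset.mem_range] at hj
    have hj' : j < N := lt_of_lt_of_le hj hm
    rw [extz, dif_pos hj', rot, exti, extz, dif_pos (Nat.mod_lt _ hN)]
    congr 1
    ext
    simp only [Fin.add_def]
    rw [Nat.add_comm]
  rw [Finset.sum_congr rfl hrot]
  have : ∑ j ∈ Finset.range m, exti q ((t:ℕ) + j)
      = ∑ j ∈ Finset.Ico (t:ℕ) ((t:ℕ)+m), exti q j := by
    rw [Finset.sum_Ico_eq_sum_range]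
    simp
  rw [this, Finset.sum_Ico_eq_sub _ (by omega), G, G]

def stat (p : Fin N → ℤ) : ℕ :=
  (univ.filter (fun i : Fin N => p i = 1 ∧ psum p (i : ℕ) ≤ 0)).card

def key (q : Fin N → ℤ) (t : Fin N) : ℤ := N * psum q (t:ℕ) + ((N:ℤ) - 1 - (t:ℕ))

def Ups (q : Fin N → ℤ) : Finset (Fin N) := univ.filter (fun u : Fin N => q u = 1)

def rank (q : Fin N → ℤ) (t : Fin N) : ℕ :=
  ((Ups q).filter (fun u => key q u ≤ key q t)).card

lemma key_le_iff (q : Fin N → ℤ) (u t : Fin N) :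
    key q u ≤ key q t ↔ (psum q u < psum q t ∨ (psum q u = psum q t ∧ (t:ℕ) ≤ (u:ℕ))) := by
  have hu := u.is_lt
  have ht := t.is_lt
  have hu' : ((u:ℕ):ℤ) < (N:ℤ) := by exact_mod_cast hu
  have ht' : ((t:ℕ):ℤ) < (N:ℤ) := by exact_mod_cast ht
  have hu0 : (0:ℤ) ≤ ((u:ℕ):ℤ) := Int.ofNat_nonneg _
  have ht0 : (0:ℤ) ≤ ((t:ℕ):ℤ) := Int.ofNat_nonneg _
  unfold key
  set a := psum q (u:ℕ) with ha
  set b := psum q (t:ℕ) with hb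
  constructor
  · intro h
    rcases lt_trichotomy a b with h1|h1|h1
    · exact Or.inl h1
    · refine Or.inr ⟨h1, ?_⟩
      rw [h1] at h
      have : (N:ℤ) - 1 - (u:ℕ) ≤ (N:ℤ) - 1 - (t:ℕ) := by linarith
      exact_mod_cast (by linarith : ((t:ℕ):ℤ) ≤ ((u:ℕ):ℤ))
    · exfalso
      have h2 : (1:ℤ) ≤ a - b := by linarith
      have h3 : (N:ℤ) * 1 ≤ (N:ℤ) * (a - b) :=
        mul_le_mul_of_nonneg_left h2 (Int.ofNat_nonneg _)
      have h4 : (N:ℤ) * (a-b) = N*a - N*b := by ring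
      linarith
  · rintro (h | ⟨h1, h2⟩)
    · have h2 : (1:ℤ) ≤ b - a := by linarith
      have h3 : (N:ℤ) * 1 ≤ (N:ℤ) * (b - a) :=
        mul_le_mul_of_nonneg_left h2 (Int.ofNat_nonneg _)
      have h4 : (N:ℤ) * (b-a) = N*b - N*a := by ring
      linarith
    · rw [h1]
      have : ((t:ℕ):ℤ) ≤ ((u:ℕ):ℤ) := by exact_mod_cast h2
      linarith

lemma key_inj (q : Fin N → ℤ) (u t : Fin N) (h : key q u = key q t) : u = t := by
  have h1 := (key_le_iff q u t).mp h.le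
  have h2 := (key_le_iff q t u).mp h.ge
  have : (u:ℕ) = (t:ℕ) := by
    rcases h1 with h1|⟨h1a,h1b⟩ <;> rcases h2 with h2|⟨h2a,h2b⟩ <;> omega
  exact Fin.ext this

lemma rank_injOn (q : Fin N → ℤ) (t t' : Fin N) (ht : t ∈ Ups q) (ht' : t' ∈ Ups q)
    (h : rank q t = rank q t') : t = t' := by
  have main : ∀ s s' : Fin N, s' ∈ Ups q → key q s < key q s' →
      rank q s < rank q s' := by
    intro s s' hs' hk
    apply Finset.card_lt_card
    constructor
    · intro u hu
      rw [Finset.mem_filter] at hu ⊢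
      exact ⟨hu.1, le_trans hu.2 hk.le⟩
    · intro hcon
      have := hcon (Finset.mem_filter.mpr ⟨hs', le_refl _⟩)
      rw [Finset.mem_filter] at this
      exact absurd this.2 (not_le.mpr hk)
  rcases lt_trichotomy (key q t) (key q t') with hk|hk|hk
  · exact absurd h (Nat.ne_of_lt (main t t' ht' hk))
  · exact key_inj q t t' hk
  · exact absurd h.symm (Nat.ne_of_lt (main t' t ht hk))

lemma rank_mem (q : Fin N → ℤ) (t : Fin N) (ht : t ∈ Ups q) :
    rank q t ∈ Finset.Icc 1 (Ups q).card := by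
  rw [Finset.mem_Icc]
  constructor
  · exact Finset.card_pos.mpr ⟨t, Finset.mem_filter.mpr ⟨ht, le_refl _⟩⟩
  · exact Finset.card_le_card (Finset.filter_subset _ _)

/-- The key counting step: the number of low up-steps of the rotation of `q` by `t`
equals the rank of `t` in the key order. -/
lemma stat_rot_eq_rank (q : Fin N → ℤ) (hsum : psum q N = 1) (t : Fin N) :
    stat (rot t q) = rank q t := by
  have hN : 0 < N := t.pos
  haveI : NeZero N := ⟨hN.ne'⟩
  unfold stat rank
  have htarget : (Ups q).filter (fun u => key q u ≤ key q t)
      = univ.filter (fun u : Fin N => q u = 1 ∧ key q u ≤ key q t) := by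
    rw [Ups, Finset.filter_filter]
  rw [htarget]
  apply Finset.card_nbij (fun i => i + t)
  · -- maps filter to filter
    intro i hi
    simp only [Finset.mem_coe, Finset.mem_filter] at hi ⊢
    obtain ⟨-, h1, h2⟩ := hi
    refine ⟨Finset.mem_univ _, h1, ?_⟩
    have hiv := i.is_lt
    have htv := t.is_lt
    have huval : ((i + t : Fin N) : ℕ) = ((i:ℕ) + (t:ℕ)) % N := by
      simp [Fin.add_def]
    rw [psum_rot_eq t q (i:ℕ) (le_of_lt i.is_lt)] at h2
    rw [key_le_iff]
    by_cases hc : (t:ℕ) + (i:ℕ) < N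
    · have huval2 : ((i + t : Fin N) : ℕ) = (t:ℕ) + (i:ℕ) := by
        rw [huval, Nat.add_comm, Nat.mod_eq_of_lt]
        omega
      rw [← psum_eq_G q _ hc.le, ← psum_eq_G q _ htv.le] at h2
      rw [huval2]
      rcases lt_or_eq_of_le (by linarith : psum q ((t:ℕ)+(i:ℕ)) ≤ psum q (t:ℕ)) with h|h
      · exact Or.inl h
      · exact Or.inr ⟨h, by omega⟩
    · have huval2 : ((i + t : Fin N) : ℕ) = (t:ℕ) + (i:ℕ) - N := by
        have h5 : ((t:ℕ) + (i:ℕ)) % N = ((t:ℕ) + (i:ℕ) - N) % N := Nat.mod_eq_sub_mod (by omega)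
        rw [huval, Nat.add_comm, h5, Nat.mod_eq_of_lt (by omega)]
      rw [G_split q ((t:ℕ)+(i:ℕ)) (by omega) (by omega), ← psum_eq_G q _ htv.le,
        ← psum_eq_G q _ (le_refl N), hsum] at h2
      left
      rw [huval2]
      linarith
  · -- injective
    intro a _ b _ hab
    exact add_left_injective t hab
  · -- surjective
    intro u hu
    rw [Finset.mem_coe, Finset.mem_filter] at hu
    obtain ⟨-, h1, h2⟩ := hu
    have hit : u - t + t = u := sub_add_cancel u t
    refine ⟨u - t, ?_, hit⟩
    rw [Finset.mem_coe, Finset.mem_filter]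
    refine ⟨Finset.mem_univ _, ?_, ?_⟩
    · show q (u - t + t) = 1
      rw [hit]; exact h1
    · set i := u - t with hi
      have hiv := i.is_lt
      have htv := t.is_lt
      have huv := u.is_lt
      rw [psum_rot_eq t q (i:ℕ) (le_of_lt i.is_lt)]
      rw [key_le_iff] at h2
      have huval : (u : ℕ) = ((i:ℕ) + (t:ℕ)) % N := by
        rw [← hit]; simp [Fin.add_def]
      by_cases hc : (t:ℕ) + (i:ℕ) < N
      · have huval2 : (u : ℕ) = (t:ℕ) + (i:ℕ) := by
          rw [huval, Nat.add_comm, Nat.mod_eq_of_lt]; omega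
        rw [← psum_eq_G q _ hc.le, ← psum_eq_G q _ htv.le, ← huval2]
        rcases h2 with h|⟨ha,hb⟩
        · linarith
        · linarith [ha.le]
      · have huval2 : (u : ℕ) = (t:ℕ) + (i:ℕ) - N := by
          have h5 : ((t:ℕ) + (i:ℕ)) % N = ((t:ℕ) + (i:ℕ) - N) % N := Nat.mod_eq_sub_mod (by omega)
          rw [huval, Nat.add_comm, h5, Nat.mod_eq_of_lt (by omega)]
        rw [G_split q ((t:ℕ)+(i:ℕ)) (by omega) (by omega), ← psum_eq_G q _ htv.le,
          ← psum_eq_G q _ (le_refl N), hsum, ← huval2]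
        rcases h2 with h|⟨ha,hb⟩
        · linarith
        · exfalso; omega

theorem cycle_lemma (q : Fin N → ℤ) (hsum : psum q N = 1) (v : ℕ)
    (hv1 : 1 ≤ v) (hv2 : v ≤ (Ups q).card) :
    ∃! t : Fin N, q t = 1 ∧ stat (rot t q) = v := by
  have hmaps : ∀ t ∈ Ups q, rank q t ∈ Finset.Icc 1 (Ups q).card := fun t ht => rank_mem q t ht
  have hinj : ∀ t₁ t₂ : Fin N, ∀ h₁ : t₁ ∈ Ups q, ∀ h₂ : t₂ ∈ Ups q,
      rank q t₁ = rank q t₂ → t₁ = t₂ := fun t1 t2 h1 h2 h => rank_injOn q t1 t2 h1 h2 h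
  have hcard : (Finset.Icc 1 (Ups q).card).card ≤ (Ups q).card := by
    rw [Nat.card_Icc]; omega
  have hsurj := Finset.surj_on_of_inj_on_of_card_le (fun t _ => rank q t)
    hmaps (fun a b ha hb h => hinj a b ha hb h) hcard v (Finset.mem_Icc.mpr ⟨hv1, hv2⟩)
  obtain ⟨t, ht, hrt⟩ := hsurj
  have hrt' : v = rank q t := hrt
  refine ⟨t, ⟨(Finset.mem_filter.mp ht).2, by rw [stat_rot_eq_rank q hsum t, ← hrt']⟩, ?_⟩
  intro t' ⟨h1', h2'⟩
  apply hinj t' t (Finset.mem_filter.mpr ⟨Finset.mem_univ _, h1'⟩) ht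
  rw [← stat_rot_eq_rank q hsum t', h2', hrt']

def cpk [NeZero N] (q : Fin N → ℤ) : ℕ := (univ.filter (fun i : Fin N => q i = 1 ∧ q (i+1) = -1)).card

lemma rot_rot [NeZero N] (t t' : Fin N) (q : Fin N → ℤ) :
    rot t' (rot t q) = rot (t' + t) q := by
  funext i
  show q ((i + t') + t) = q (i + (t' + t))
  rw [add_assoc]

lemma rot_zero [NeZero N] (q : Fin N → ℤ) : rot 0 q = q := by
  funext i
  show q (i + 0) = q i
  rw [add_zero]

lemma ups_rot_card [NeZero N] (t : Fin N) (q : Fin N → ℤ) :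
    (Ups (rot t q)).card = (Ups q).card := by
  unfold Ups
  apply Finset.card_nbij (fun i => i + t)
  · intro i hi
    simp only [Finset.mem_coe, Finset.mem_filter] at hi ⊢
    exact ⟨Finset.mem_univ _, hi.2⟩
  · intro a _ b _ hab
    exact add_left_injective t hab
  · intro u hu
    rw [Finset.mem_coe, Finset.mem_filter] at hu
    refine ⟨u - t, ?_, sub_add_cancel u t⟩
    rw [Finset.mem_coe, Finset.mem_filter]
    refine ⟨Finset.mem_univ _, ?_⟩
    show q (u - t + t) = 1
    rw [sub_add_cancel]
    exact hu.2

lemma cpk_rot [NeZero N] (t : Fin N) (q : Fin N → ℤ) :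
    cpk (rot t q) = cpk q := by
  unfold cpk
  apply Finset.card_nbij (fun i => i + t)
  · intro i hi
    simp only [Finset.mem_coe, Finset.mem_filter] at hi ⊢
    refine ⟨Finset.mem_univ _, hi.2.1, ?_⟩
    have : i + t + 1 = (i + 1) + t := by rw [add_right_comm]
    rw [this]
    exact hi.2.2
  · intro a _ b _ hab
    exact add_left_injective t hab
  · intro u hu
    rw [Finset.mem_coe, Finset.mem_filter] at hu
    refine ⟨u - t, ?_, sub_add_cancel u t⟩
    rw [Finset.mem_coe, Finset.mem_filter]
    refine ⟨Finset.mem_univ _, ?_, ?_⟩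
    · show q (u - t + t) = 1
      rw [sub_add_cancel]; exact hu.2.1
    · show rot t q (u - t + 1) = -1
      show q (u - t + 1 + t) = -1
      have : u - t + 1 + t = u + 1 := by
        rw [add_right_comm, sub_add_cancel]
      rw [this]
      exact hu.2.2

lemma linear_eq_cpk (n : ℕ) (hn : 0 < n) (p : Fin (2*n+1) → ℤ) (h0 : p 0 = 1) :
    (univ.filter (fun i : Fin (2*n) => p i.castSucc = 1 ∧ p i.succ = -1)).card = cpk p := by
  unfold cpk
  apply Finset.card_nbij (fun i => i.castSucc)
  · intro i hi
    simp only [Finset.mem_coe, Finset.mem_filter] at hi ⊢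
    refine ⟨Finset.mem_univ _, hi.2.1, ?_⟩
    have : (i.castSucc : Fin (2*n+1)) + 1 = i.succ := by
      apply Fin.ext
      simp [Fin.add_def]
    rw [this]
    exact hi.2.2
  · intro a _ b _ hab
    exact Fin.castSucc_injective _ hab
  · intro u hu
    rw [Finset.mem_coe, Finset.mem_filter] at hu
    obtain ⟨-, h1, h2⟩ := hu
    have hlt : (u : ℕ) < 2*n := by
      by_contra hcon
      have hu2 : (u : ℕ) = 2*n := by omega
      have : u + 1 = 0 := by
        apply Fin.ext
        simp [Fin.add_def, hu2]
      rw [this, h0] at h2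
      norm_num at h2
    refine ⟨⟨(u:ℕ), hlt⟩, ?_, by apply Fin.ext; simp⟩
    rw [Finset.mem_coe, Finset.mem_filter]
    have hcs : (⟨(u:ℕ), hlt⟩ : Fin (2*n)).castSucc = u := by apply Fin.ext; simp
    have hone : ((1 : Fin (2*n+1)) : ℕ) = 1 := by
      rw [Fin.val_one', Nat.mod_eq_of_lt (by omega)]
    have hsc : (⟨(u:ℕ), hlt⟩ : Fin (2*n)).succ = u + 1 := by
      apply Fin.ext
      rw [Fin.val_succ, Fin.val_add, hone, Nat.mod_eq_of_lt (by omega)]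
    rw [hcs, hsc]
    exact ⟨Finset.mem_univ _, h1, h2⟩

lemma sum_total (n : ℕ) (q : Fin (2*n+1) → ℤ) (hq : ∀ i, q i = 1 ∨ q i = -1)
    (hones : (Ups q).card = n+1) : psum q (2*n+1) = 1 := by
  have huniv : Finset.univ.filter (fun j : Fin (2*n+1) => (j : ℕ) < 2*n+1) = univ := by
    apply Finset.filter_true_of_mem
    intro i _
    exact i.is_lt
  rw [psum, huniv]
  rw [← Finset.sum_filter_add_sum_filter_not univ (fun i => q i = 1)]
  have e1 : ∑ i ∈ univ.filter (fun i => q i = 1), q i = (n+1 : ℤ) := by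
    rw [Finset.sum_congr rfl (fun i hi => (Finset.mem_filter.mp hi).2), Finset.sum_const]
    rw [show univ.filter (fun i => q i = 1) = Ups q from rfl, hones]
    simp
  have e2 : ∑ i ∈ univ.filter (fun i => ¬ q i = 1), q i = -(n : ℤ) := by
    have hval : ∀ i ∈ univ.filter (fun i => ¬ q i = 1), q i = -1 := by
      intro i hi
      rcases hq i with h|h
      · exact absurd h (Finset.mem_filter.mp hi).2
      · exact h
    rw [Finset.sum_congr rfl hval, Finset.sum_const]
    have hcard : (univ.filter (fun i => ¬ q i = 1)).card = n := by
      have := Finset.card_filter_add_card_filter_not (s := univ)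
        (p := fun i : Fin (2*n+1) => q i = 1)
      rw [show univ.filter (fun i => q i = 1) = Ups q from rfl, hones] at this
      simp at this
      omega
    rw [hcard]
    simp
  rw [e1, e2]
  ring

def Pred (n k j : ℕ) (p : Fin (2*n+1) → ℤ) : Prop :=
  (∀ i, p i = 1 ∨ p i = -1) ∧
  (univ.filter (fun i => p i = 1)).card = n + 1 ∧
  p ⟨0, Nat.succ_pos _⟩ = 1 ∧
  (univ.filter (fun i : Fin (2*n) => p i.castSucc = 1 ∧ p i.succ = -1)).card = k ∧
  (univ.filter (fun i : Fin (2*n+1) => p i = 1 ∧ psum p (i : ℕ) ≤ 0)).card = j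

lemma mk_zero_eq (n : ℕ) : (⟨0, Nat.succ_pos _⟩ : Fin (2*n+1)) = 0 := by
  apply Fin.ext
  simp

lemma pred_shift (n k v v' : ℕ) (hn : 0 < n) (hv'1 : 1 ≤ v') (hv'2 : v' ≤ n+1)
    (p : Fin (2*n+1) → ℤ) (hp : Pred n k v p) :
    Pred n k v' (rot (cycle_lemma p (sum_total n p hp.1 hp.2.1) v' hv'1
      (by rw [show (Ups p).card = n+1 from hp.2.1]; exact hv'2)).choose p) := by
  obtain ⟨hq, hones, h0, hpk, hst⟩ := hp
  set cl := cycle_lemma p (sum_total n p hq hones) v' hv'1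
      (by rw [show (Ups p).card = n+1 from hones]; exact hv'2) with hcl
  obtain ⟨ht1, ht2⟩ := cl.choose_spec.1
  set t := cl.choose with htdef
  have hstart : rot t p 0 = 1 := by
    show p (0 + t) = 1
    rw [zero_add]
    exact ht1
  refine ⟨fun i => hq _, ?_, ?_, ?_, ?_⟩
  · rw [show univ.filter (fun i => rot t p i = 1) = Ups (rot t p) from rfl,
      ups_rot_card, ← hones]
    rfl
  · rw [mk_zero_eq]
    exact hstart
  · rw [linear_eq_cpk n hn _ hstart, cpk_rot, ← linear_eq_cpk n hn p (by rw [← mk_zero_eq n]; exact h0)]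
    exact hpk
  · exact ht2

lemma stat_bounds (n k j : ℕ) (p : Fin (2*n+1) → ℤ) (hp : Pred n k j p) :
    1 ≤ j ∧ j ≤ n + 1 := by
  obtain ⟨hq, hones, h0, hpk, hst⟩ := hp
  constructor
  · rw [← hst]
    apply Finset.card_pos.mpr
    refine ⟨0, Finset.mem_filter.mpr ⟨Finset.mem_univ _, ?_, ?_⟩⟩
    · rw [← mk_zero_eq n]; exact h0
    · have : ((0 : Fin (2*n+1)) : ℕ) = 0 := rfl
      rw [this]
      rw [show psum p 0 = 0 from by simp [psum]]
  · rw [← hst, ← hones]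
    apply Finset.card_le_card
    intro i hi
    rw [Finset.mem_filter] at hi ⊢
    exact ⟨hi.1, hi.2.1⟩

noncomputable def shiftMap (n k v v' : ℕ) (hn : 0 < n) (hv'1 : 1 ≤ v') (hv'2 : v' ≤ n+1) :
    {p : Fin (2*n+1) → ℤ // Pred n k v p} → {p : Fin (2*n+1) → ℤ // Pred n k v' p} :=
  fun pp => ⟨_, pred_shift n k v v' hn hv'1 hv'2 pp.val pp.prop⟩

lemma shift_inv (n k v v' : ℕ) (hn : 0 < n) (hv1 : 1 ≤ v) (hv2 : v ≤ n+1) (hv'1 : 1 ≤ v') (hv'2 : v' ≤ n+1)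
    (pp : {p : Fin (2*n+1) → ℤ // Pred n k v p}) :
    shiftMap n k v' v hn hv1 hv2 (shiftMap n k v v' hn hv'1 hv'2 pp) = pp := by
  obtain ⟨p, hp⟩ := pp
  apply Subtype.ext
  show rot _ (rot _ p) = p
  set cl1 := cycle_lemma p (sum_total n p hp.1 hp.2.1) v' hv'1
      (by rw [show (Ups p).card = n+1 from hp.2.1]; exact hv'2) with hcl1
  set t := cl1.choose with ht
  set q := rot t p with hqdef
  set hq' : Pred n k v' q := pred_shift n k v v' hn hv'1 hv'2 p hp with hq'def
  set cl2 := cycle_lemma q (sum_total n q hq'.1 hq'.2.1) v hv1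
      (by rw [show (Ups q).card = n+1 from hq'.2.1]; exact hv2) with hcl2
  set s := cl2.choose with hs
  have hs_eq : s = -t := by
    symm
    apply cl2.choose_spec.2
    constructor
    · show p (-t + t) = 1
      rw [neg_add_cancel, ← mk_zero_eq n]
      exact hp.2.2.1
    · rw [hqdef, rot_rot, neg_add_cancel, rot_zero]
      exact hp.2.2.2.2
  show rot s q = p
  rw [hs_eq, hqdef, rot_rot, neg_add_cancel, rot_zero]

lemma equi (n k v v' : ℕ) (hn : 0 < n) (hv1 : 1 ≤ v) (hv2 : v ≤ n+1) (hv'1 : 1 ≤ v') (hv'2 : v' ≤ n+1) :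
    Nat.card {p : Fin (2*n+1) → ℤ // Pred n k v p}
      = Nat.card {p : Fin (2*n+1) → ℤ // Pred n k v' p} := by
  apply Nat.card_congr
  exact ⟨shiftMap n k v v' hn hv'1 hv'2, shiftMap n k v' v hn hv1 hv2,
    fun pp => shift_inv n k v v' hn hv1 hv2 hv'1 hv'2 pp,
    fun pp => shift_inv n k v' v hn hv'1 hv'2 hv1 hv2 pp⟩



def onesB {L : ℕ} (w : Fin L → Bool) : ℕ := (univ.filter (fun i => w i = true)).card

def desB {L : ℕ} (w : Fin (L+1) → Bool) : ℕ :=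
  (univ.filter (fun i : Fin L => w i.castSucc = true ∧ w i.succ = false)).card

def cnt1 (L a k : ℕ) : ℕ :=
  (univ.filter (fun w : Fin (L+1) → Bool => onesB w = a ∧ desB w = k ∧ w 0 = true)).card

def cnt0 (L a k : ℕ) : ℕ :=
  (univ.filter (fun w : Fin (L+1) → Bool => onesB w = a ∧ desB w = k ∧ w 0 = false)).card

def cntAll (L a k : ℕ) : ℕ :=
  (univ.filter (fun w : Fin (L+1) → Bool => onesB w = a ∧ desB w = k)).card

lemma onesB_cons {L : ℕ} (b : Bool) (v : Fin L → Bool) :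
    onesB (Fin.cons b v) = (if b = true then 1 else 0) + onesB v := by
  unfold onesB
  rw [Finset.card_filter, Finset.card_filter, Fin.sum_univ_succ]
  simp [Fin.cons_zero, Fin.cons_succ]

lemma desB_cons {L : ℕ} (b : Bool) (v : Fin (L+1) → Bool) :
    desB (Fin.cons b v) = (if b = true ∧ v 0 = false then 1 else 0) + desB v := by
  unfold desB
  rw [Finset.card_filter, Finset.card_filter, Fin.sum_univ_succ,
    Fin.cons_succ, Fin.castSucc_zero, Fin.cons_zero]
  congr 1

lemma onesB_decomp {L : ℕ} (w : Fin (L+1) → Bool) :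
    onesB w = (if w 0 = true then 1 else 0) + onesB (Fin.tail w) := by
  conv_lhs => rw [← Fin.cons_self_tail w]
  rw [onesB_cons]

lemma desB_decomp {L : ℕ} (w : Fin (L+2) → Bool) :
    desB w = (if w 0 = true ∧ Fin.tail w 0 = false then 1 else 0) + desB (Fin.tail w) := by
  conv_lhs => rw [← Fin.cons_self_tail w]
  rw [desB_cons]

lemma card_cons_filter {L : ℕ} (b : Bool) (P : (Fin (L+1) → Bool) → Prop) [DecidablePred P] :
    (univ.filter (fun w : Fin (L+2) → Bool => w 0 = b ∧ P (Fin.tail w))).card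
      = (univ.filter P).card := by
  apply Finset.card_nbij' (fun w => Fin.tail w) (fun v => Fin.cons b v)
  · intro w hw
    simp only [Finset.mem_coe, Finset.mem_filter] at hw ⊢
    exact ⟨Finset.mem_univ _, hw.2.2⟩
  · intro v hv
    simp only [Finset.mem_coe, Finset.mem_filter] at hv ⊢
    refine ⟨Finset.mem_univ _, Fin.cons_zero _ _, ?_⟩
    rw [Fin.tail_cons]
    exact hv.2
  · intro w hw
    simp only [Finset.mem_coe, Finset.mem_filter] at hw
    beta_reduce
    rw [← hw.2.1, Fin.cons_self_tail]
  · intro v _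
    beta_reduce
    rw [Fin.tail_cons]

lemma cnt1_zero (L k : ℕ) : cnt1 L 0 k = 0 := by
  unfold cnt1
  rw [Finset.card_eq_zero, Finset.filter_eq_empty_iff]
  intro w _
  rintro ⟨h1, -, h3⟩
  have : (0 : Fin (L+1)) ∈ univ.filter (fun i => w i = true) := by
    rw [Finset.mem_filter]; exact ⟨Finset.mem_univ _, h3⟩
  rw [show univ.filter (fun i => w i = true) = ∅ from Finset.card_eq_zero.mp h1] at this
  exact absurd this (Finset.notMem_empty _)

lemma filter_split_head {L : ℕ} (C : (Fin (L+2) → Bool) → Prop) [DecidablePred C] :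
    (univ.filter C).card
      = (univ.filter (fun w => C w ∧ Fin.tail w 0 = true)).card
        + (univ.filter (fun w => C w ∧ Fin.tail w 0 = false)).card := by
  rw [← Finset.card_filter_add_card_filter_not
    (s := univ.filter C) (p := fun w => Fin.tail w 0 = true), Finset.filter_filter,
    Finset.filter_filter]
  congr 2
  apply Finset.filter_congr
  intro w _
  simp [Bool.not_eq_true]

lemma cnt1_rec (L a k : ℕ) : cnt1 (L+1) (a+1) (k+1) = cnt1 L a (k+1) + cnt0 L a k := by
  unfold cnt1 cnt0
  rw [filter_split_head]
  congr 1
  · rw [← card_cons_filter true (fun v => onesB v = a ∧ desB v = (k+1) ∧ v 0 = true)]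
    congr 1
    apply Finset.filter_congr
    intro w _
    have ho := onesB_decomp w
    have hd := desB_decomp w
    cases hw0 : w 0 <;> cases ht0 : Fin.tail w 0 <;>
      simp only [hw0, ht0, if_true, if_false, and_true, and_false, true_and, false_and,
        Bool.false_eq_true, Bool.true_eq_false, iff_false, not_and, and_self] at ho hd ⊢ <;>
      omega
  · rw [← card_cons_filter true (fun v => onesB v = a ∧ desB v = k ∧ v 0 = false)]
    congr 1
    apply Finset.filter_congr
    intro w _
    have ho := onesB_decomp w
    have hd := desB_decomp w
    cases hw0 : w 0 <;> cases ht0 : Fin.tail w 0 <;>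
      simp only [hw0, ht0, if_true, if_false, and_true, and_false, true_and, false_and,
        Bool.false_eq_true, Bool.true_eq_false, iff_false, not_and, and_self] at ho hd ⊢ <;>
      omega

lemma cnt1_rec0 (L a : ℕ) : cnt1 (L+1) (a+1) 0 = cnt1 L a 0 := by
  unfold cnt1
  rw [← card_cons_filter true (fun v => onesB v = a ∧ desB v = 0 ∧ v 0 = true)]
  congr 1
  apply Finset.filter_congr
  intro w _
  have ho := onesB_decomp w
  have hd := desB_decomp w
  cases hw0 : w 0 <;> cases ht0 : Fin.tail w 0 <;>
    simp only [hw0, ht0, if_true, if_false, and_true, and_false, true_and, false_and,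
      Bool.false_eq_true, Bool.true_eq_false, iff_false, not_and, and_self] at ho hd ⊢ <;>
    omega

lemma cnt0_rec (L a k : ℕ) : cnt0 (L+1) a k = cntAll L a k := by
  unfold cnt0 cntAll
  rw [← card_cons_filter false (fun v => onesB v = a ∧ desB v = k)]
  congr 1
  apply Finset.filter_congr
  intro w _
  have ho := onesB_decomp w
  have hd := desB_decomp w
  cases hw0 : w 0 <;> cases ht0 : Fin.tail w 0 <;>
    simp only [hw0, ht0, if_true, if_false, and_true, and_false, true_and, false_and,
      Bool.false_eq_true, Bool.true_eq_false, iff_false, not_and, and_self] at ho hd ⊢ <;>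
    omega

lemma desB_L0 (w : Fin 1 → Bool) : desB w = 0 := by
  unfold desB
  simp

lemma cnt0_base (k : ℕ) : cnt0 0 0 k = if k = 0 then 1 else 0 := by
  rcases k with _ | k
  · rw [if_pos rfl]
    unfold cnt0
    rw [Finset.card_eq_one]
    refine ⟨(fun _ => false), ?_⟩
    ext w
    rw [Finset.mem_filter, Finset.mem_singleton]
    constructor
    · rintro ⟨-, h1, -, h3⟩
      funext i
      have : i = 0 := by
        apply Fin.ext
        have := i.is_lt
        omega
      rw [this, h3]
    · rintro rfl
      refine ⟨Finset.mem_univ _, ?_, desB_L0 _, rfl⟩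
      unfold onesB
      simp
  · rw [if_neg (by omega)]
    unfold cnt0
    rw [Finset.card_eq_zero, Finset.filter_eq_empty_iff]
    intro w _
    rintro ⟨-, h2, -⟩
    rw [desB_L0 w] at h2
    omega

lemma onesB_full {L : ℕ} (w : Fin (L+1) → Bool) (h : onesB w = L+1) : w = fun _ => true := by
  unfold onesB at h
  have : univ.filter (fun i => w i = true) = univ := by
    apply Finset.eq_univ_of_card
    rw [h, Fintype.card_fin]
  funext i
  have := Finset.mem_filter.mp (this ▸ Finset.mem_univ i)
  exact this.2

lemma desB_allTrue (L : ℕ) : desB (fun _ : Fin (L+1) => true) = 0 := by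
  unfold desB
  simp

lemma cntAll_full (L k : ℕ) : cntAll L (L+1) k = if k = 0 then 1 else 0 := by
  rcases k with _ | k
  · rw [if_pos rfl]
    unfold cntAll
    rw [Finset.card_eq_one]
    refine ⟨(fun _ => true), ?_⟩
    ext w
    rw [Finset.mem_filter, Finset.mem_singleton]
    constructor
    · rintro ⟨-, h1, -⟩
      exact onesB_full w h1
    · rintro rfl
      refine ⟨Finset.mem_univ _, ?_, desB_allTrue L⟩
      unfold onesB
      simp
  · rw [if_neg (by omega)]
    unfold cntAll
    rw [Finset.card_eq_zero, Finset.filter_eq_empty_iff]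
    intro w _
    rintro ⟨h1, h2⟩
    rw [onesB_full w h1, desB_allTrue L] at h2
    omega

lemma main_cnt : ∀ L : ℕ,
    (∀ a k, a ≤ L → cnt1 L a (k+1) = Nat.choose a (k+1) * Nat.choose (L-a) k)
    ∧ (∀ a, a ≤ L → cnt1 L a 0 = 0)
    ∧ (∀ a k, a ≤ L → cnt0 L a k = Nat.choose a k * Nat.choose (L-a) k) := by
  intro L
  induction L with
  | zero =>
    refine ⟨?_, ?_, ?_⟩
    · intro a k ha
      interval_cases a
      rw [cnt1_zero]
      simp
    · intro a ha
      interval_cases a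
      rw [cnt1_zero]
    · intro a k ha
      interval_cases a
      rw [cnt0_base]
      rcases k with _ | k <;> simp
  | succ L ih =>
    obtain ⟨ihQ, ihQ0, ihR⟩ := ih
    have ihP : ∀ a k, a ≤ L+1 → cntAll L a k = Nat.choose a k * Nat.choose (L+1-a) k := by
      intro a k ha
      rcases Nat.lt_or_ge a (L+1) with ha' | ha'
      · have haL : a ≤ L := by omega
        have hsplit : cntAll L a k = cnt1 L a k + cnt0 L a k := by
          unfold cntAll cnt1 cnt0
          rw [← Finset.card_filter_add_card_filter_not
            (s := univ.filter (fun w : Fin (L+1) → Bool => onesB w = a ∧ desB w = k))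
            (p := fun w => w 0 = true), Finset.filter_filter, Finset.filter_filter]
          congr 2
          · apply Finset.filter_congr
            intro w _
            tauto
          · apply Finset.filter_congr
            intro w _
            simp only [Bool.not_eq_true]
            tauto
        rcases k with _ | k
        · rw [hsplit, ihQ0 a haL, ihR a 0 haL]
          simp
        · rw [hsplit, ihQ a k haL, ihR a (k+1) haL]
          have hsub : L + 1 - a = (L - a) + 1 := by omega
          rw [hsub, Nat.choose_succ_succ (L-a) k]
          ring
      · have ha2 : a = L + 1 := by omega
        subst ha2
        rw [cntAll_full]
        have : L + 1 - (L+1) = 0 := by omega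
        rw [this]
        rcases k with _ | k <;> simp
    refine ⟨?_, ?_, ?_⟩
    · intro a k ha
      rcases a with _ | a
      · rw [cnt1_zero]
        simp
      · have haL : a ≤ L := by omega
        rw [cnt1_rec, ihQ a k haL, ihR a k haL]
        have hsub : L + 1 - (a+1) = L - a := by omega
        rw [hsub, Nat.choose_succ_succ a k]
        ring
    · intro a ha
      rcases a with _ | a
      · rw [cnt1_zero]
      · rw [cnt1_rec0, ihQ0 a (by omega)]
    · intro a k ha
      rw [cnt0_rec, ihP a k ha]

lemma cnt1_final (n k : ℕ) (hn : 1 ≤ n) (hk1 : 1 ≤ k) :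
    cnt1 (2*n) (n+1) k = Nat.choose (n+1) k * Nat.choose (n-1) (k-1) := by
  obtain ⟨k, rfl⟩ : ∃ k', k = k' + 1 := ⟨k - 1, by omega⟩
  rw [(main_cnt (2*n)).1 (n+1) k (by omega)]
  have h1 : 2*n - (n+1) = n - 1 := by omega
  have h2 : k + 1 - 1 = k := by omega
  rw [h1, h2]

def toZ {N : ℕ} (w : Fin N → Bool) : Fin N → ℤ := fun i => if w i then 1 else -1

def toB {N : ℕ} (p : Fin N → ℤ) : Fin N → Bool := fun i => decide (p i = 1)

lemma toZ_toB {N : ℕ} (p : Fin N → ℤ) (hq : ∀ i, p i = 1 ∨ p i = -1) : toZ (toB p) = p := by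
  funext i
  rcases hq i with h | h
  · simp [toZ, toB, h]
  · have h1 : ¬ (p i = 1) := by rw [h]; norm_num
    simp [toZ, toB, h1, h]

lemma toB_toZ {N : ℕ} (w : Fin N → Bool) : toB (toZ w) = w := by
  funext i
  cases h : w i <;> simp [toZ, toB, h]

lemma pred_toZ_iff (n k v : ℕ) (w : Fin (2*n+1) → Bool) :
    Pred n k v (toZ w) ↔ ((onesB w = n+1 ∧ desB w = k ∧ w 0 = true) ∧ stat (toZ w) = v) := by
  have h1 : (univ.filter (fun i : Fin (2*n+1) => toZ w i = 1))
      = (univ.filter (fun i => w i = true)) := by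
    apply Finset.filter_congr
    intro i _
    cases h : w i <;> simp [toZ, h]
  have h2 : (univ.filter (fun i : Fin (2*n) => toZ w i.castSucc = 1 ∧ toZ w i.succ = -1))
      = (univ.filter (fun i : Fin (2*n) => w i.castSucc = true ∧ w i.succ = false)) := by
    apply Finset.filter_congr
    intro i _
    cases h : w i.castSucc <;> cases h' : w i.succ <;> simp [toZ, h, h']
  have h3 : toZ w ⟨0, Nat.succ_pos _⟩ = 1 ↔ w 0 = true := by
    rw [mk_zero_eq]
    cases h : w 0 <;> simp [toZ, h]
  have h4 : ∀ i, toZ w i = 1 ∨ toZ w i = -1 := by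
    intro i
    cases h : w i <;> simp [toZ, h]
  unfold Pred
  rw [h1, h2]
  constructor
  · rintro ⟨-, ho, hs, hd, hst⟩
    exact ⟨⟨ho, hd, h3.mp hs⟩, hst⟩
  · rintro ⟨⟨ho, hd, hs⟩, hst⟩
    exact ⟨h4, ho, h3.mpr hs, hd, hst⟩

lemma natcard_pred (n k v : ℕ) :
    Nat.card {p : Fin (2*n+1) → ℤ // Pred n k v p}
      = (univ.filter (fun w : Fin (2*n+1) → Bool =>
          (onesB w = n+1 ∧ desB w = k ∧ w 0 = true) ∧ stat (toZ w) = v)).card := by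
  rw [← Nat.card_eq_finsetCard]
  apply Nat.card_congr
  refine ⟨fun pp => ⟨toB pp.val, ?_⟩, fun ww => ⟨toZ ww.val, ?_⟩, ?_, ?_⟩
  · rw [Finset.mem_filter]
    refine ⟨Finset.mem_univ _, ?_⟩
    rw [← pred_toZ_iff, toZ_toB pp.val pp.prop.1]
    exact pp.prop
  · have := ww.prop
    rw [Finset.mem_filter] at this
    exact (pred_toZ_iff n k v ww.val).mpr this.2
  · intro pp
    apply Subtype.ext
    exact toZ_toB pp.val pp.prop.1
  · intro ww
    apply Subtype.ext
    exact toB_toZ ww.val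

theorem main_result (n k : ℕ) (hn : 1 ≤ n) (hk1 : 1 ≤ k) (hk2 : k ≤ n)
    (j : ℕ) (hj1 : 1 ≤ j) (hj2 : j ≤ n + 1) :
    Nat.card {p : Fin (2*n+1) → ℤ // Pred n k j p} * (n + 1)
      = Nat.choose (n+1) k * Nat.choose (n-1) (k-1) := by
  have hn0 : 0 < n := hn
  -- the fiberwise decomposition
  have hfib : cnt1 (2*n) (n+1) k
      = ∑ v ∈ Finset.Icc 1 (n+1), (univ.filter (fun w : Fin (2*n+1) → Bool =>
          (onesB w = n+1 ∧ desB w = k ∧ w 0 = true) ∧ stat (toZ w) = v)).card := by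
    unfold cnt1
    rw [Finset.card_eq_sum_card_fiberwise
      (f := fun w : Fin (2*n+1) → Bool => stat (toZ w)) (t := Finset.Icc 1 (n+1))]
    · apply Finset.sum_congr rfl
      intro v _
      rw [Finset.filter_filter]
    · intro w hw
      rw [Finset.mem_coe, Finset.mem_filter] at hw
      have hp : Pred n k (stat (toZ w)) (toZ w) :=
        (pred_toZ_iff n k (stat (toZ w)) w).mpr ⟨hw.2, rfl⟩
      have := stat_bounds n k (stat (toZ w)) (toZ w) hp
      rw [Finset.mem_coe, Finset.mem_Icc]
      exact this
  have hequi : ∀ v ∈ Finset.Icc 1 (n+1),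
      (univ.filter (fun w : Fin (2*n+1) → Bool =>
          (onesB w = n+1 ∧ desB w = k ∧ w 0 = true) ∧ stat (toZ w) = v)).card
      = Nat.card {p : Fin (2*n+1) → ℤ // Pred n k j p} := by
    intro v hv
    rw [Finset.mem_Icc] at hv
    rw [← natcard_pred]
    exact equi n k v j hn0 hv.1 hv.2 hj1 hj2
  rw [Finset.sum_congr rfl hequi, Finset.sum_const, Nat.card_Icc] at hfib
  rw [show n + 1 + 1 - 1 = n + 1 from by omega, smul_eq_mul] at hfib
  rw [Nat.mul_comm, ← hfib]
  exact cnt1_final n k hn hk1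

end CF

/-- Among paths in 𝒫(n,1,1) starting with an up step and having exactly `k` peaks,
for each `1 ≤ j ≤ n+1` the number with exactly `j` up steps starting on or below
the x-axis is `(1/(n+1))·C(n+1,k)·C(n-1,k-1)`. -/
theorem narayana_chung_feller_up_steps (n k : ℕ) (hn : 1 ≤ n) (hk1 : 1 ≤ k) (hk2 : k ≤ n)
    (j : ℕ) (hj1 : 1 ≤ j) (hj2 : j ≤ n + 1) :
    Nat.card {p : Fin (2*n+1) → ℤ //
      (∀ i, p i = 1 ∨ p i = -1) ∧
      (univ.filter (fun i => p i = 1)).card = n + 1 ∧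
      p ⟨0, Nat.succ_pos _⟩ = 1 ∧
      (univ.filter (fun i : Fin (2*n) => p i.castSucc = 1 ∧ p i.succ = -1)).card = k ∧
      (univ.filter (fun i : Fin (2*n+1) => p i = 1 ∧ psum p (i : ℕ) ≤ 0)).card = j }
      * (n + 1) = Nat.choose (n+1) k * Nat.choose (n-1) (k-1) := by
  exact CF.main_result n k hn hk1 hk2 j hj1 hj2
end

section
/- Let n ≥ 0. For each i with 1 ≤ i ≤ 2n+1, the number of paths p in 𝒫(n,1,1) whose left-most highest vertex is at position i (that is, i is the smallest index m with 0 ≤ m ≤ 2n+1 such that s_m = max{s_0, s_1, …, s_{2n+1}}) equals (1/(2n+1))·C(2n+1,n); in particular this count is independent of i. -/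
open Finset

section
variable {N : ℕ} [NeZero N]

def pext (p : Fin N → ℤ) (t : ℕ) : ℤ := p ⟨t % N, Nat.mod_lt _ N.pos_of_neZero⟩

def rot (k : ℕ) (p : Fin N → ℤ) : Fin N → ℤ := fun m => pext p ((m : ℕ) + k)

lemma pext_apply (p : Fin N → ℤ) (j : Fin N) : pext p (j : ℕ) = p j := by
  simp [pext, Nat.mod_eq_of_lt j.isLt]

lemma pext_add_N (p : Fin N → ℤ) (t : ℕ) : pext p (t + N) = pext p t := by
  simp [pext, Nat.add_mod_right]

lemma pext_rot (p : Fin N → ℤ) (k t : ℕ) : pext (rot k p) t = pext p (t + k) := by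
  simp [pext, rot, Nat.mod_add_mod]

lemma rot_rot (p : Fin N → ℤ) (a b : ℕ) : rot a (rot b p) = rot (a + b) p := by
  funext m
  simp [rot, pext, Nat.mod_add_mod, add_assoc, add_comm b a]

lemma rot_N (p : Fin N → ℤ) : rot N p = p := by
  funext m
  rw [show rot N p m = pext p ((m : ℕ) + N) from rfl, pext_add_N, pext_apply]

lemma psum_eq_range (p : Fin N → ℤ) {m : ℕ} (hm : m ≤ N) :
    psum p m = ∑ t ∈ range m, pext p t := by
  rw [psum]
  refine Finset.sum_nbij' (i := fun j => (j : ℕ))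
    (j := fun t => (⟨t % N, Nat.mod_lt _ N.pos_of_neZero⟩ : Fin N)) ?_ ?_ ?_ ?_ ?_
  · intro a ha; simp only [mem_filter, mem_range] at *; exact ha.2
  · intro t ht
    simp only [mem_range] at ht
    simp only [mem_filter, mem_univ, true_and]
    simpa [Nat.mod_eq_of_lt (lt_of_lt_of_le ht hm)] using ht
  · intro a _; exact Fin.ext (Nat.mod_eq_of_lt a.isLt)
  · intro t ht; simp only [mem_range] at ht
    exact Nat.mod_eq_of_lt (lt_of_lt_of_le ht hm)
  · intro a _; exact (pext_apply p a).symm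

omit [NeZero N] in
lemma psum_zero (p : Fin N → ℤ) : psum p 0 = 0 := by simp [psum]

omit [NeZero N] in
lemma psum_ge (p : Fin N → ℤ) {m : ℕ} (hm : N ≤ m) : psum p m = psum p N := by
  unfold psum
  congr 1
  ext j
  simp only [mem_filter]
  exact ⟨fun h => ⟨h.1, j.isLt⟩, fun h => ⟨h.1, lt_of_lt_of_le j.isLt hm⟩⟩

lemma psum_rot (p : Fin N → ℤ) {k m : ℕ} (hk : k ≤ N) (hm : m ≤ N) :
    psum (rot k p) m = if m + k ≤ N then psum p (m + k) - psum p k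
      else psum p N - psum p k + psum p (m + k - N) := by
  rw [psum_eq_range _ hm]
  have h1 : ∀ t ∈ range m, pext (rot k p) t = pext p (t + k) := fun t _ => pext_rot p k t
  rw [Finset.sum_congr rfl h1]
  have h2 : ∑ t ∈ range m, pext p (t + k) = ∑ t ∈ Finset.Ico k (m + k), pext p t := by
    rw [Finset.sum_Ico_eq_sum_range]
    simp [add_comm k]
  rw [h2]
  split_ifs with h
  · rw [Finset.sum_Ico_eq_sub _ (Nat.le_add_left k m), ← psum_eq_range _ h,
      ← psum_eq_range _ hk]
  · push_neg at h
    rw [← Finset.sum_Ico_consecutive _ hk (le_of_lt h)]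
    have h3 : ∑ t ∈ Finset.Ico N (m + k), pext p t = ∑ t ∈ range (m + k - N), pext p (N + t) := by
      rw [Finset.sum_Ico_eq_sum_range]
    have h4 : ∀ t ∈ range (m + k - N), pext p (N + t) = pext p t := by
      intro t _; rw [add_comm]; exact pext_add_N p t
    rw [h3, Finset.sum_congr rfl h4, Finset.sum_Ico_eq_sub _ hk,
      ← psum_eq_range _ le_rfl, ← psum_eq_range _ hk, ← psum_eq_range _ (by omega)]

end

section
variable {N : ℕ} [NeZero N]

def ismax (p : Fin N → ℤ) (i : ℕ) : Prop := ∀ m ≤ N, psum p m ≤ psum p i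

omit [NeZero N] in
lemma ismax_exists (p : Fin N → ℤ) : ∃ i, ismax p i := by
  obtain ⟨b, hb, hb2⟩ := Finset.exists_max_image (range (N + 1)) (psum p) ⟨0, by simp⟩
  exact ⟨b, fun m hm => hb2 m (by simp; omega)⟩

noncomputable def lm (p : Fin N → ℤ) : ℕ :=
  @Nat.find _ (Classical.decPred _) (ismax_exists p)

omit [NeZero N] in
lemma lm_ismax (p : Fin N → ℤ) : ismax p (lm p) := @Nat.find_spec _ (Classical.decPred _) (ismax_exists p)

omit [NeZero N] in
lemma lm_min (p : Fin N → ℤ) {m : ℕ} (hm : m < lm p) : ¬ ismax p m :=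
  @Nat.find_min _ (Classical.decPred _) (ismax_exists p) _ hm

omit [NeZero N] in
lemma lm_le (p : Fin N → ℤ) : lm p ≤ N := by
  obtain ⟨b, hb, hb2⟩ := Finset.exists_max_image (range (N + 1)) (psum p) ⟨0, by simp⟩
  have : ismax p b := fun m hm => hb2 m (by simp; omega)
  have h2 : lm p ≤ b := @Nat.find_min' _ (Classical.decPred _) (ismax_exists p) _ this
  simp only [mem_range] at hb
  omega

omit [NeZero N] in
lemma lm_strict (p : Fin N → ℤ) {m : ℕ} (hm : m < lm p) : psum p m < psum p (lm p) := by
  have h1 : psum p m ≤ psum p (lm p) := lm_ismax p m (le_trans (le_of_lt hm) (lm_le p))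
  rcases lt_or_eq_of_le h1 with h | h
  · exact h
  · exact absurd (fun m' hm' => h ▸ lm_ismax p m' hm') (lm_min p hm)

omit [NeZero N] in
lemma lm_pos (p : Fin N → ℤ) (hT : psum p N = 1) : 1 ≤ lm p := by
  by_contra h
  push_neg at h
  interval_cases h' : lm p
  · have := lm_ismax p N le_rfl
    rw [h', hT, psum_zero] at this
    omega

omit [NeZero N] in
lemma cond_iff_lm (p : Fin N → ℤ) {j : ℕ} (hj : j ≤ N) :
    ((∀ m ≤ N, psum p m ≤ psum p j) ∧ (∀ m < j, psum p m < psum p j)) ↔ lm p = j := by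
  constructor
  · rintro ⟨h1, h2⟩
    have hle : lm p ≤ j := @Nat.find_min' _ (Classical.decPred _) (ismax_exists p) _ h1
    rcases lt_or_eq_of_le hle with h | h
    · exact absurd (lm_ismax p j hj) (not_le_of_gt (h2 _ h))
    · exact h
  · rintro rfl
    exact ⟨lm_ismax p, fun m hm => lm_strict p hm⟩

lemma lm_rot (p : Fin N → ℤ) (hT : psum p N = 1) {k : ℕ} (hk : k ≤ N) :
    lm (rot k p) = if k < lm p then lm p - k else lm p + N - k := by
  have hlmle := lm_le p
  have hlmpos := lm_pos p hT
  set i := lm p with hi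
  have hM : ∀ m ≤ N, psum p m ≤ psum p i := lm_ismax p
  have hS : ∀ m < i, psum p m < psum p i := fun m hm => lm_strict p hm
  by_cases hcase : k < i
  · rw [if_pos hcase]
    rw [← cond_iff_lm (rot k p) (by omega)]
    constructor
    · intro m hm
      rw [psum_rot p hk hm, psum_rot p hk (by omega : i - k ≤ N)]
      rw [if_pos (by omega : i - k + k ≤ N)]
      have hik : i - k + k = i := by omega
      rw [hik]
      split_ifs with h
      · have := hM (m + k) h; omega
      · have := hS (m + k - N) (by omega)
        rw [hT]
        omega
    · intro m hm
      rw [psum_rot p hk (by omega : m ≤ N), psum_rot p hk (by omega : i - k ≤ N)]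
      rw [if_pos (by omega : i - k + k ≤ N), if_pos (by omega : m + k ≤ N)]
      have hik : i - k + k = i := by omega
      rw [hik]
      have := hS (m + k) (by omega)
      omega
  · push_neg at hcase
    rw [if_neg (by omega)]
    rw [← cond_iff_lm (rot k p) (by omega)]
    have htar : i + N - k ≤ N := by omega
    constructor
    · intro m hm
      rw [psum_rot p hk htar, if_neg (show ¬ (i + N - k + k ≤ N) by omega),
        show i + N - k + k - N = i by omega, psum_rot p hk hm]
      split_ifs with h
      · have := hM (m + k) h
        rw [hT]; omega
      · have := hM (m + k - N) (by omega); omega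
    · intro m hm
      rw [psum_rot p hk htar, if_neg (show ¬ (i + N - k + k ≤ N) by omega),
        show i + N - k + k - N = i by omega, psum_rot p hk (by omega : m ≤ N)]
      split_ifs with h
      · have := hM (m + k) h; rw [hT]; omega
      · have := hS (m + k - N) (by omega); omega

end

section
variable {N : ℕ} [NeZero N]

lemma rot_entries (p : Fin N → ℤ) (k : ℕ) (h : ∀ m, p m = 1 ∨ p m = -1) :
    ∀ m, rot k p m = 1 ∨ rot k p m = -1 := fun m => h _

lemma key_mod (k : ℕ) (hk : k ≤ N) (m : Fin N) :
    (((m : ℕ) + (N - k)) % N + k) % N = (m : ℕ) := by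
  rw [Nat.mod_add_mod, show (m : ℕ) + (N - k) + k = (m : ℕ) + N by omega,
    Nat.add_mod_right, Nat.mod_eq_of_lt m.isLt]

lemma key_mod' (k : ℕ) (hk : k ≤ N) (m : Fin N) :
    (((m : ℕ) + k) % N + (N - k)) % N = (m : ℕ) := by
  rw [Nat.mod_add_mod, show (m : ℕ) + k + (N - k) = (m : ℕ) + N by omega,
    Nat.add_mod_right, Nat.mod_eq_of_lt m.isLt]

lemma card_rot (p : Fin N → ℤ) {k : ℕ} (hk : k ≤ N) :
    (univ.filter (fun m => rot k p m = 1)).card = (univ.filter (fun m => p m = 1)).card := by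
  refine Finset.card_nbij' (fun m => (⟨((m : ℕ) + k) % N, Nat.mod_lt _ N.pos_of_neZero⟩ : Fin N))
    (fun m => (⟨((m : ℕ) + (N - k)) % N, Nat.mod_lt _ N.pos_of_neZero⟩ : Fin N)) ?_ ?_ ?_ ?_
  · intro a ha
    simp only [Finset.mem_coe, mem_filter, mem_univ, true_and] at *
    exact ha
  · intro a ha
    simp only [Finset.mem_coe, mem_filter, mem_univ, true_and] at *
    show pext p _ = 1
    simp only [pext]
    convert ha using 3
    exact key_mod k hk a
  · intro a _
    exact Fin.ext (key_mod' k hk a)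
  · intro a _
    exact Fin.ext (key_mod k hk a)

end

section
variable (N K : ℕ)

def Omeg : Finset (Fin N → ℤ) :=
  (Finset.powersetCard K Finset.univ).image (fun U m => if m ∈ U then (1 : ℤ) else -1)

variable {N K}

lemma mem_Omeg {p : Fin N → ℤ} :
    p ∈ Omeg N K ↔ (∀ m, p m = 1 ∨ p m = -1) ∧ (univ.filter (fun m => p m = 1)).card = K := by
  constructor
  · rintro hp
    simp only [Omeg, mem_image, Finset.mem_powersetCard] at hp
    obtain ⟨U, ⟨-, hU⟩, rfl⟩ := hp
    refine ⟨fun m => by by_cases h : m ∈ U <;> simp [h], ?_⟩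
    rw [← hU]
    congr 1
    ext m
    by_cases h : m ∈ U <;> simp [h]
  · rintro ⟨h1, h2⟩
    simp only [Omeg, mem_image, Finset.mem_powersetCard]
    refine ⟨univ.filter (fun m => p m = 1), ⟨subset_univ _, h2⟩, ?_⟩
    funext m
    rcases h1 m with h | h <;> simp [h]

lemma Omeg_card : (Omeg N K).card = N.choose K := by
  rw [Omeg, Finset.card_image_of_injOn, Finset.card_powersetCard, Finset.card_univ,
    Fintype.card_fin]
  intro U hU V hV h
  ext m
  have := congrFun h m
  by_cases h1 : m ∈ U <;> by_cases h2 : m ∈ V <;> simp [h1, h2] at this ⊢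

lemma psum_total {p : Fin N → ℤ} (h : p ∈ Omeg N K) (hK : K ≤ N) :
    psum p N = (K : ℤ) - ((N - K : ℕ) : ℤ) := by
  classical
  obtain ⟨h1, h2⟩ := mem_Omeg.mp h
  have hfil : univ.filter (fun j : Fin N => (j : ℕ) < N) = univ := by
    apply Finset.filter_true_of_mem
    intro j _
    exact j.isLt
  rw [psum, hfil, ← Finset.sum_filter_add_sum_filter_not univ (fun j => p j = 1) p]
  have e1 : ∑ j ∈ univ.filter (fun j => p j = 1), p j = (K : ℤ) := by
    rw [Finset.sum_congr rfl (fun j hj => (Finset.mem_filter.mp hj).2), Finset.sum_const, h2]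
    simp
  have hc2 : (univ.filter (fun j => ¬ p j = 1)).card = N - K := by
    have := Finset.card_filter_add_card_filter_not (s := (univ : Finset (Fin N)))
      (p := fun j => p j = 1)
    rw [Finset.card_univ, Fintype.card_fin, h2] at this
    omega
  have e2 : ∑ j ∈ univ.filter (fun j => ¬ p j = 1), p j = -((N - K : ℕ) : ℤ) := by
    have : ∀ j ∈ univ.filter (fun j => ¬ p j = 1), p j = -1 := by
      intro j hj
      rcases h1 j with h | h
      · exact absurd h (Finset.mem_filter.mp hj).2
      · exact h
    rw [Finset.sum_congr rfl this, Finset.sum_const, hc2]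
    simp
  rw [e1, e2]
  ring

lemma rot_mem_Omeg [NeZero N] {p : Fin N → ℤ} (h : p ∈ Omeg N K) {k : ℕ} (hk : k ≤ N) :
    rot k p ∈ Omeg N K := by
  obtain ⟨h1, h2⟩ := mem_Omeg.mp h
  exact mem_Omeg.mpr ⟨rot_entries p k h1, (card_rot p hk).trans h2⟩

/-- Among paths in 𝒫(n,1,1), for each `1 ≤ i ≤ 2n+1` the number of paths whose
left-most highest vertex is at position `i` is `(1/(2n+1))·C(2n+1,n)`;
in particular this count is independent of `i`. -/
theorem leftmost_highest_point (n : ℕ) (i : ℕ) (hi1 : 1 ≤ i) (hi2 : i ≤ 2*n + 1) :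
    Nat.card {p : Fin (2*n+1) → ℤ //
      (∀ m, p m = 1 ∨ p m = -1) ∧
      (univ.filter (fun m => p m = 1)).card = n + 1 ∧
      (∀ m ≤ 2*n + 1, psum p m ≤ psum p i) ∧
      (∀ m < i, psum p m < psum p i) }
      * (2*n + 1) = Nat.choose (2*n+1) n := by
  classical
  set N := 2*n+1 with hN
  haveI : NeZero N := ⟨by omega⟩
  set Om := Omeg N (n+1) with hOm
  -- every element of Om has total sum 1
  have hT : ∀ p ∈ Om, psum p N = 1 := by
    intro p hp
    rw [psum_total hp (by omega)]
    have : N - (n+1) = n := by omega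
    rw [this]
    push_cast
    ring
  -- fibers of lm over Icc 1 N
  have hfib : ∀ p ∈ Om, lm p ∈ Finset.Icc 1 N := by
    intro p hp
    rw [Finset.mem_Icc]
    exact ⟨lm_pos p (hT p hp), lm_le p⟩
  have hcard : Om.card = ∑ j ∈ Finset.Icc 1 N, (Om.filter (fun p => lm p = j)).card :=
    Finset.card_eq_sum_card_fiberwise hfib
  -- all fibers have the same size
  have hsame : ∀ j ∈ Finset.Icc 1 N,
      (Om.filter (fun p => lm p = j)).card = (Om.filter (fun p => lm p = i)).card := by
    intro j hj
    rw [Finset.mem_Icc] at hj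
    set k : ℕ := if i ≤ j then j - i else j + N - i with hk
    have hkN : k ≤ N := by rw [hk]; split_ifs <;> omega
    have hk'N : N - k ≤ N := by omega
    refine Finset.card_nbij' (rot k) (rot (N - k)) ?_ ?_ ?_ ?_
    · intro p hp
      rw [Finset.mem_coe, Finset.mem_filter] at hp ⊢
      obtain ⟨hp1, hp2⟩ := hp
      refine ⟨rot_mem_Omeg hp1 hkN, ?_⟩
      rw [lm_rot p (hT p hp1) hkN, hp2]
      rw [hk]
      split_ifs with h1 h2 h2 <;> omega
    · intro q hq
      rw [Finset.mem_coe, Finset.mem_filter] at hq ⊢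
      obtain ⟨hq1, hq2⟩ := hq
      refine ⟨rot_mem_Omeg hq1 hk'N, ?_⟩
      rw [lm_rot q (hT q hq1) hk'N, hq2]
      rw [hk]
      split_ifs with h1 h2 h2 <;> omega
    · intro p _
      rw [rot_rot, show N - k + k = N by omega, rot_N]
    · intro q _
      rw [rot_rot, show k + (N - k) = N by omega, rot_N]
  -- total count
  have htot : Om.card = (Om.filter (fun p => lm p = i)).card * N := by
    rw [hcard, Finset.sum_congr rfl hsame, Finset.sum_const, Nat.card_Icc]
    simp [mul_comm]
  have hchoose : N.choose (n+1) = N.choose n := by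
    have h1 : n + 1 ≤ N := by omega
    have h2 : N - (n+1) = n := by omega
    calc N.choose (n+1) = N.choose (N - (n+1)) := (Nat.choose_symm h1).symm
    _ = N.choose n := by rw [h2]
  -- identify the subtype with the fiber
  have hset : {p : Fin N → ℤ |
      (∀ m, p m = 1 ∨ p m = -1) ∧
      (univ.filter (fun m => p m = 1)).card = n + 1 ∧
      (∀ m ≤ N, psum p m ≤ psum p i) ∧
      (∀ m < i, psum p m < psum p i)} = ↑(Om.filter (fun p => lm p = i)) := by
    ext p
    simp only [Set.mem_setOf_eq, Finset.coe_filter, Finset.mem_filter]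
    constructor
    · rintro ⟨h1, h2, h3, h4⟩
      have hp : p ∈ Om := mem_Omeg.mpr ⟨h1, h2⟩
      exact ⟨hp, (cond_iff_lm p hi2).mp ⟨h3, h4⟩⟩
    · rintro ⟨hp, hlm⟩
      obtain ⟨h1, h2⟩ := mem_Omeg.mp hp
      obtain ⟨h3, h4⟩ := (cond_iff_lm p hi2).mpr hlm
      exact ⟨h1, h2, h3, h4⟩
  have hnatcard : Nat.card {p : Fin N → ℤ //
      (∀ m, p m = 1 ∨ p m = -1) ∧
      (univ.filter (fun m => p m = 1)).card = n + 1 ∧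
      (∀ m ≤ N, psum p m ≤ psum p i) ∧
      (∀ m < i, psum p m < psum p i)} = (Om.filter (fun p => lm p = i)).card := by
    rw [← Set.ncard_coe_finset, ← hset]
    exact Nat.card_coe_set_eq _
  rw [hnatcard, ← htot, hOm, Omeg_card, hchoose]
end
end
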